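/- Let β₁, β₂ ∈ (0,1) satisfy β₁(2−β₂) < 1. Then the invariant set A₁ = [0,1] × {1} has a locally riddled basin: there exists a relatively open set U ⊆ [0,1]² containing A₁ such that for every point p ∈ A₁ and every ε > 0, the set of points q ∈ [0,1]² with dist(q,p) < ε and Fⁿ(q) ∉ U for some n ≥ 0 has positive two-dimensional Lebesgue measure. -/

import Mathlib

open MeasureTheory Filter Set

noncomputable section

/-- The fiber map `g₁,β(y) = y + y(1-y)(y-β)`. -/
def g1 (β y : ℝ) : ℝ := y + y * (1 - y) * (y - β)

/-- The fiber map `g₂,β(y) = y - y(1-y)(y-β)`. -/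
def g2 (β y : ℝ) : ℝ := y - y * (1 - y) * (y - β)

/-- The doubling map on `[0,1]`. -/
def dbl (x : ℝ) : ℝ := if x ≤ 1/2 then 2*x else 2*x - 1

/-- The skew product `F(x,y) = (f(x), g₁,β₁(y))` for `x ≤ 1/2` and
`F(x,y) = (f(x), g₂,β₂(y))` for `x > 1/2`. -/
def Fsk (β1 β2 : ℝ) (p : ℝ × ℝ) : ℝ × ℝ :=
  if p.1 ≤ 1/2 then (dbl p.1, g1 β1 p.2) else (dbl p.1, g2 β2 p.2)

/-- The unit square `[0,1]²`. -/
def unitSq : Set (ℝ × ℝ) := Set.Icc (0:ℝ) 1 ×ˢ Set.Icc (0:ℝ) 1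

/-- The basin of points of `[0,1]²` whose second coordinate tends to `c` under iteration
of the skew product. -/
def basin (β1 β2 c : ℝ) : Set (ℝ × ℝ) :=
  {p | p ∈ unitSq ∧ Tendsto (fun n : ℕ => ((Fsk β1 β2)^[n] p).2) atTop (nhds c)}

/-- The invariant set `A₁ = [0,1] × {1}`. -/
def A1 : Set (ℝ × ℝ) := Set.Icc (0:ℝ) 1 ×ˢ ({1} : Set ℝ)

lemma g1_nonneg (β y : ℝ) (hβ0 : 0 < β) (hβ1 : β < 1) (h0 : 0 ≤ y) (h1 : y ≤ 1) :
    0 ≤ g1 β y := by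
  unfold g1; nlinarith [mul_nonneg h0 (sub_nonneg.2 h1), mul_nonneg (mul_nonneg h0 h0) (sub_nonneg.2 h1)]

lemma g1_le (β y : ℝ) (hβ0 : 0 < β) (hβ1 : β < 1) (h0 : 0 ≤ y) (h1 : y ≤ 1) :
    β * (1 - y) ≤ 1 - g1 β y := by
  unfold g1; nlinarith [mul_nonneg (sub_nonneg.2 h1) (mul_nonneg h0 h0), mul_nonneg (sub_nonneg.2 h1) (sub_nonneg.2 h1)]

lemma g2_nonneg (β y : ℝ) (hβ0 : 0 < β) (hβ1 : β < 1) (h0 : 0 ≤ y) (h1 : y ≤ 1) :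
    0 ≤ g2 β y := by
  unfold g2; nlinarith [mul_nonneg h0 (sub_nonneg.2 h1), mul_nonneg (mul_nonneg h0 h0) (sub_nonneg.2 h1)]

lemma g2_le (β y : ℝ) (hβ0 : 0 < β) (hβ1 : β < 1) (h0 : 0 ≤ y) (h1 : y ≤ 1) :
    (1 - β) * (1 - y) ≤ 1 - g2 β y := by
  unfold g2; nlinarith [mul_nonneg (sub_nonneg.2 h1) (mul_nonneg h0 h0), mul_nonneg h0 (sub_nonneg.2 h1)]

lemma g2_inv (β y : ℝ) (hβ0 : 0 < β) (hβ1 : β < 1) (h0 : 0 ≤ y) (hc : y ≤ (1+β)/2) :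
    g2 β y ≤ (1+β)/2 := by
  unfold g2
  rcases le_or_gt y β with h | h
  · nlinarith [mul_nonneg h0 (sub_nonneg.2 (by linarith : y ≤ 1)), sq_nonneg y]
  · nlinarith [mul_nonneg h0 (by linarith : (0:ℝ) ≤ 1 - y), sq_nonneg y]

lemma g2_step (β y η : ℝ) (hβ0 : 0 < β) (hβ1 : β < 1) (hη : 0 < η)
    (hc : (1+β)/2 ≤ y) (h1 : y ≤ 1 - η) :
    g2 β y ≤ y - (1-β)/4 * η := by
  unfold g2
  nlinarith [mul_nonneg (by linarith : (0:ℝ) ≤ y - β) (by linarith : (0:ℝ) ≤ 1 - y),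
    mul_pos hη (by linarith : (0:ℝ) < 1 - β)]

lemma Fsk_fst (β1 β2 : ℝ) (p : ℝ × ℝ) : (Fsk β1 β2 p).1 = dbl p.1 := by
  unfold Fsk; split <;> rfl

lemma Fsk_snd (β1 β2 : ℝ) (p : ℝ × ℝ) :
    (Fsk β1 β2 p).2 = if p.1 ≤ 1/2 then g1 β1 p.2 else g2 β2 p.2 := by
  unfold Fsk; split <;> rfl

lemma Fsk_iter_fst (β1 β2 : ℝ) (p : ℝ × ℝ) (n : ℕ) :
    ((Fsk β1 β2)^[n] p).1 = dbl^[n] p.1 := by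
  induction n with
  | zero => rfl
  | succ n ih =>
      rw [Function.iterate_succ_apply', Function.iterate_succ_apply', Fsk_fst, ih]

lemma phase1 (β1 β2 : ℝ) (hb1 : β1 ∈ Set.Ioo (0:ℝ) 1) (hb2 : β2 ∈ Set.Ioo (0:ℝ) 1)
    (q : ℝ × ℝ) (h0 : 0 ≤ q.2) (h1 : q.2 ≤ 1) (n : ℕ) :
    0 ≤ ((Fsk β1 β2)^[n] q).2 ∧ ((Fsk β1 β2)^[n] q).2 ≤ 1 ∧
      (β1 * (1 - β2))^n * (1 - q.2) ≤ 1 - ((Fsk β1 β2)^[n] q).2 := by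
  obtain ⟨b10, b11⟩ := hb1
  obtain ⟨b20, b21⟩ := hb2
  have hm0 : 0 < β1 * (1 - β2) := mul_pos b10 (by linarith)
  induction n with
  | zero => refine ⟨h0, h1, ?_⟩; simp
  | succ n ih =>
      obtain ⟨ih0, ih1, ih2⟩ := ih
      set u := ((Fsk β1 β2)^[n] q).2 with hu
      have key : (β1 * (1-β2))^n * (1 - q.2) ≥ 0 := by
        apply mul_nonneg (by positivity) (by linarith)
      rw [Function.iterate_succ_apply', Fsk_snd]
      have hmle1 : β1 * (1 - β2) ≤ β1 := by nlinarith
      have hmle2 : β1 * (1 - β2) ≤ 1 - β2 := by nlinarith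
      split
      · refine ⟨g1_nonneg _ _ b10 b11 ih0 ih1, ?_, ?_⟩
        · have := g1_le β1 u b10 b11 ih0 ih1
          nlinarith
        · have h := g1_le β1 u b10 b11 ih0 ih1
          have : β1 * ((β1 * (1-β2))^n * (1 - q.2)) ≤ β1 * (1 - u) :=
            mul_le_mul_of_nonneg_left ih2 (le_of_lt b10)
          calc (β1 * (1-β2))^(n+1) * (1 - q.2)
              = (β1 * (1-β2)) * ((β1 * (1-β2))^n * (1 - q.2)) := by ring
            _ ≤ β1 * ((β1 * (1-β2))^n * (1 - q.2)) := by
                apply mul_le_mul_of_nonneg_right hmle1 key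
            _ ≤ β1 * (1 - u) := this
            _ ≤ 1 - g1 β1 u := h
      · refine ⟨g2_nonneg _ _ b20 b21 ih0 ih1, ?_, ?_⟩
        · have := g2_le β2 u b20 b21 ih0 ih1
          nlinarith
        · have h := g2_le β2 u b20 b21 ih0 ih1
          have : (1-β2) * ((β1 * (1-β2))^n * (1 - q.2)) ≤ (1-β2) * (1 - u) :=
            mul_le_mul_of_nonneg_left ih2 (by linarith)
          calc (β1 * (1-β2))^(n+1) * (1 - q.2)
              = (β1 * (1-β2)) * ((β1 * (1-β2))^n * (1 - q.2)) := by ring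
            _ ≤ (1-β2) * ((β1 * (1-β2))^n * (1 - q.2)) := by
                apply mul_le_mul_of_nonneg_right hmle2 key
            _ ≤ (1-β2) * (1 - u) := this
            _ ≤ 1 - g2 β2 u := h

lemma dbl_iter : ∀ (k j : ℕ), j < 2^k → ∀ x : ℝ, (j:ℝ)/2^k < x → x < ((j:ℝ)+1)/2^k →
    dbl^[k] x = 2^k * x - j := by
  intro k
  induction k with
  | zero =>
      intro j hj x h1 h2
      interval_cases j
      simp
  | succ k ih =>
      intro j hj x h1 h2
      have h2k : (0:ℝ) < 2^k := by positivity
      have h2k1 : (0:ℝ) < 2^(k+1) := by positivity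
      have hpow : (2:ℝ)^(k+1) = 2*2^k := by ring
      have hA : (j:ℝ) < x * 2^(k+1) := by rwa [div_lt_iff₀ h2k1] at h1
      have hB : x * 2^(k+1) < (j:ℝ) + 1 := by rwa [lt_div_iff₀ h2k1] at h2
      rw [Function.iterate_succ_apply]
      rcases lt_or_ge j (2^k) with hcase | hcase
      · have hj1 : (j:ℝ) + 1 ≤ 2^k := by exact_mod_cast Nat.succ_le_of_lt hcase
        have hx2 : x ≤ 1/2 := by nlinarith
        have hd : dbl x = 2*x := if_pos hx2
        rw [hd, ih j hcase (2*x) (by rw [div_lt_iff₀ h2k]; nlinarith)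
          (by rw [lt_div_iff₀ h2k]; nlinarith)]
        ring
      · have hx2 : ¬ (x ≤ 1/2) := by
          push_neg
          have : (2:ℝ)^k ≤ (j:ℝ) := by exact_mod_cast hcase
          nlinarith
        have hd : dbl x = 2*x - 1 := if_neg hx2
        have hjc : ((j - 2^k : ℕ) : ℝ) = (j:ℝ) - 2^k := by
          push_cast [Nat.cast_sub hcase]; ring
        have hjlt : j - 2^k < 2^k := by
          have : 2^(k+1) = 2*2^k := by ring
          omega
        have hc : (2:ℝ)^k ≤ (j:ℝ) := by exact_mod_cast hcase
        rw [hd, ih (j - 2^k) hjlt (2*x - 1)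
          (by rw [div_lt_iff₀ h2k, hjc]; nlinarith)
          (by rw [lt_div_iff₀ h2k, hjc]; nlinarith)]
        rw [hjc]; ring

lemma phase2 (β1 β2 : ℝ) : ∀ (N : ℕ) (q : ℝ × ℝ), 1 - (1/2)^N < q.1 → q.1 < 1 →
    ((Fsk β1 β2)^[N] q).2 = (g2 β2)^[N] q.2 := by
  intro N
  induction N with
  | zero => intro q _ _; rfl
  | succ N ih =>
      intro q h1 h2
      have hx : ¬ (q.1 ≤ 1/2) := by
        push_neg
        have h : ((1:ℝ)/2)^(N+1) ≤ (1/2)^1 :=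
          pow_le_pow_of_le_one (by norm_num) (by norm_num) (by omega)
        rw [pow_one] at h
        linarith
      have hF : Fsk β1 β2 q = (2*q.1 - 1, g2 β2 q.2) := by
        unfold Fsk dbl
        rw [if_neg hx, if_neg hx]
      rw [Function.iterate_succ_apply, hF, ih]
      · rw [Function.iterate_succ_apply]
      · have he : ((1:ℝ)/2)^(N+1) = (1/2)*(1/2)^N := by ring
        rw [he] at h1
        push_neg at hx
        dsimp only
        linarith
      · dsimp only; push_neg at hx; linarith

lemma drop (β η : ℝ) (hβ0 : 0 < β) (hβ1 : β < 1) (hη : 0 < η) (N : ℕ)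
    (hN : 1 - η - N * ((1-β)/4*η) ≤ (1+β)/2) :
    ∀ y, 0 ≤ y → y ≤ 1 - η → (g2 β)^[N] y ≤ (1+β)/2 := by
  set c := (1+β)/2 with hc
  set δ := (1-β)/4*η with hδ
  have hδ0 : 0 < δ := mul_pos (by linarith) hη
  have hcl : c ≤ 1 := by rw [hc]; linarith
  have aux : ∀ n : ℕ, ∀ y, 0 ≤ y → y ≤ 1 - η →
      0 ≤ (g2 β)^[n] y ∧ ((g2 β)^[n] y ≤ c ∨ (g2 β)^[n] y ≤ 1 - η - n * δ) := by
    intro n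
    induction n with
    | zero => intro y h0 h1; exact ⟨h0, Or.inr (by simpa using h1)⟩
    | succ n ih =>
        intro y h0 h1
        obtain ⟨u0, hcase⟩ := ih y h0 h1
        set u := (g2 β)^[n] y with hu
        have u1 : u ≤ 1 := by
          rcases hcase with h | h
          · linarith
          · have : (0:ℝ) ≤ n * δ := mul_nonneg (Nat.cast_nonneg n) hδ0.le
            linarith
        rw [Function.iterate_succ_apply']
        refine ⟨g2_nonneg β u hβ0 hβ1 u0 u1, ?_⟩
        rcases le_or_gt u c with huc | huc
        · exact Or.inl (g2_inv β u hβ0 hβ1 u0 huc)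
        · rcases hcase with h | h
          · exact absurd h (not_le.2 huc)
          · right
            have hstep : g2 β u ≤ u - δ := by
              rw [hδ]
              apply g2_step β u η hβ0 hβ1 hη (le_of_lt huc)
              have : (0:ℝ) ≤ n * δ := mul_nonneg (Nat.cast_nonneg n) hδ0.le
              linarith
            push_cast
            linarith
  intro y h0 h1
  rcases (aux N y h0 h1).2 with h | h
  · exact h
  · linarith

set_option maxHeartbeats 1000000 in
theorem stmt8 (β1 β2 : ℝ) (hβ1 : β1 ∈ Set.Ioo (0:ℝ) 1) (hβ2 : β2 ∈ Set.Ioo (0:ℝ) 1)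
    (hcond : β1 * (2 - β2) < 1) :
    ∃ U : Set (ℝ × ℝ), (∃ V : Set (ℝ × ℝ), IsOpen V ∧ U = V ∩ unitSq) ∧ A1 ⊆ U ∧
      ∀ p ∈ A1, ∀ ε > (0:ℝ),
        0 < volume {q : ℝ × ℝ | q ∈ unitSq ∧ dist q p < ε ∧
          ∃ n : ℕ, (Fsk β1 β2)^[n] q ∉ U} := by
  obtain ⟨b10, b11⟩ := hβ1
  obtain ⟨b20, b21⟩ := hβ2
  set c : ℝ := (1+β2)/2 with hc
  have hc1 : c < 1 := by rw [hc]; linarith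
  refine ⟨{p : ℝ × ℝ | c < p.2} ∩ unitSq,
    ⟨{p : ℝ × ℝ | c < p.2}, isOpen_lt continuous_const continuous_snd, rfl⟩, ?_, ?_⟩
  · rintro p hp
    have hp2 : p.2 = 1 := hp.2
    exact ⟨by simp [hp2]; linarith, hp.1, by rw [hp2]; exact ⟨zero_le_one, le_refl 1⟩⟩
  · intro p hp ε hε
    have hp1 : p.1 ∈ Set.Icc (0:ℝ) 1 := hp.1
    have hp2 : p.2 = 1 := hp.2
    obtain ⟨k, hk⟩ : ∃ k : ℕ, ((1:ℝ)/2)^k < ε/2 :=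
      exists_pow_lt_of_lt_one (by linarith) (by norm_num)
    have h2kp : (0:ℕ) < 2^k := Nat.pow_pos (by norm_num)
    set j : ℕ := min (⌊p.1 * 2^k⌋₊) (2^k - 1) with hj
    have hjlt : j < 2^k := lt_of_le_of_lt (min_le_right _ _) (Nat.sub_lt h2kp one_pos)
    have h2k : (0:ℝ) < 2^k := by positivity
    have hhalf : ((1:ℝ)/2)^k = 1/2^k := by rw [div_pow, one_pow]
    -- p.1 lies in the closed dyadic interval of index j
    have hj1 : (j:ℝ)/2^k ≤ p.1 ∧ p.1 ≤ ((j:ℝ)+1)/2^k := by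
      have hxnn : 0 ≤ p.1 * 2^k := mul_nonneg hp1.1 h2k.le
      rcases le_or_gt (⌊p.1 * 2^k⌋₊) (2^k - 1) with hcl | hcl
      · have hjj : j = ⌊p.1 * 2^k⌋₊ := by rw [hj, min_eq_left hcl]
        constructor
        · rw [div_le_iff₀ h2k, hjj]
          exact_mod_cast Nat.floor_le hxnn
        · rw [le_div_iff₀ h2k, hjj]
          have := Nat.lt_floor_add_one (p.1 * 2^k)
          push_cast at this ⊢
          linarith
      · have hfl : (2^k : ℕ) ≤ ⌊p.1 * 2^k⌋₊ := by omega
        have h1le : p.1 = 1 := by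
          have h2 : ((2^k : ℕ) : ℝ) ≤ (⌊p.1 * 2^k⌋₊ : ℝ) := by exact_mod_cast hfl
          have h3 : (⌊p.1 * 2^k⌋₊ : ℝ) ≤ p.1 * 2^k := Nat.floor_le hxnn
          have h4 : ((2^k : ℕ) : ℝ) = (2:ℝ)^k := by push_cast; ring
          have : (1:ℝ) ≤ p.1 := by
            rw [h4] at h2; nlinarith
          linarith [hp1.2]
        have hjj : j = 2^k - 1 := by rw [hj, min_eq_right (by omega)]
        have hjc : ((j:ℕ) : ℝ) = (2:ℝ)^k - 1 := by
          rw [hjj]; push_cast [Nat.cast_sub (Nat.one_le_iff_ne_zero.2 (by positivity))]; ring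
        rw [hjc, h1le]
        constructor
        · rw [div_le_iff₀ h2k]; linarith
        · rw [le_div_iff₀ h2k]; linarith
    -- parameters
    set ε' : ℝ := min (ε/2) (1/2) with hε'
    have hε'0 : 0 < ε' := lt_min (by linarith) (by norm_num)
    have hε'le : ε' ≤ 1/2 := min_le_right _ _
    have hε'le2 : ε' ≤ ε/2 := min_le_left _ _
    set m : ℝ := β1 * (1 - β2) with hm
    have hm0 : 0 < m := mul_pos b10 (by linarith)
    have hmk : 0 < m^k := pow_pos hm0 k
    set η : ℝ := m^k * (ε'/2) with hη
    have hη0 : 0 < η := by positivity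
    set δ : ℝ := (1-β2)/4*η with hδ
    have hδ0 : 0 < δ := mul_pos (by linarith) hη0
    set N : ℕ := ⌈1/δ⌉₊ with hN
    have hNδ : (1:ℝ) ≤ N * δ := by
      have h1 : 1/δ ≤ (N:ℝ) := Nat.le_ceil _
      have := mul_le_mul_of_nonneg_right h1 hδ0.le
      rwa [div_mul_cancel₀ 1 hδ0.ne'] at this
    have hdropN : 1 - η - N * ((1-β2)/4*η) ≤ (1+β2)/2 := by
      rw [← hδ]; linarith
    -- the rectangle
    set X : Set ℝ := Set.Ioo (((j:ℝ)+1-(1/2)^N)/2^k) (((j:ℝ)+1)/2^k) with hX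
    set Y : Set ℝ := Set.Ioo (1-ε') (1-ε'/2) with hY
    have hpN1 : (0:ℝ) < (1/2)^N := by positivity
    have hpN2 : ((1:ℝ)/2)^N ≤ 1 := pow_le_one₀ (by norm_num) (by norm_num)
    have hjtop : ((j:ℝ)+1) ≤ 2^k := by exact_mod_cast Nat.succ_le_of_lt hjlt
    have hlen : ((j:ℝ)+1)/2^k - (j:ℝ)/2^k = (1/2)^k := by rw [hhalf]; ring
    have hsub : X ×ˢ Y ⊆ {q : ℝ × ℝ | q ∈ unitSq ∧ dist q p < ε ∧
        ∃ n : ℕ, (Fsk β1 β2)^[n] q ∉ {p : ℝ × ℝ | c < p.2} ∩ unitSq} := by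
      rintro ⟨x, y⟩ ⟨hx, hy⟩
      rw [hX] at hx
      rw [hY] at hy
      have hxl : (j:ℝ)/2^k < x := by
        refine lt_of_le_of_lt ?_ hx.1
        gcongr
        linarith
      have hxr : x < ((j:ℝ)+1)/2^k := hx.2
      have hx0 : (0:ℝ) ≤ x := le_trans (by positivity) hxl.le
      have hx1 : x ≤ 1 := by
        refine le_trans hxr.le ?_
        rw [div_le_one h2k]; exact hjtop
      have hy0 : (0:ℝ) ≤ y := by linarith [hy.1]
      have hy1 : y ≤ 1 := by linarith [hy.2]
      refine ⟨⟨⟨hx0, hx1⟩, ⟨hy0, hy1⟩⟩, ?_, ?_⟩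
      · rw [Prod.dist_eq]
        apply max_lt
        · rw [Real.dist_eq, abs_sub_lt_iff]
          constructor <;> [linarith [hj1.1, hxr, hlen, hk, hε]; linarith [hj1.2, hxl, hlen, hk, hε]]
        · rw [hp2, Real.dist_eq, abs_sub_lt_iff]
          constructor <;> [linarith [hy.2]; linarith [hy.1]]
      · refine ⟨N + k, ?_⟩
        have hdbl : dbl^[k] x = 2^k * x - j := dbl_iter k j hjlt x hxl hxr
        have hfst : ((Fsk β1 β2)^[k] (x, y)).1 = 2^k * x - j := by
          rw [Fsk_iter_fst]; exact hdbl
        obtain ⟨P0, P1, P2⟩ := phase1 β1 β2 ⟨b10, b11⟩ ⟨b20, b21⟩ (x, y) hy0 hy1 k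
        set yk : ℝ := ((Fsk β1 β2)^[k] (x, y)).2 with hyk
        have hyk2 : yk ≤ 1 - η := by
          have h1y : ε'/2 ≤ 1 - y := by linarith [hy.2]
          have h2y : m^k * (ε'/2) ≤ m^k * (1 - y) :=
            mul_le_mul_of_nonneg_left h1y hmk.le
          have : η ≤ 1 - yk := le_trans (by rw [hη]) (le_trans h2y P2)
          linarith
        have hfN1 : 1 - (1/2)^N < ((Fsk β1 β2)^[k] (x, y)).1 := by
          rw [hfst]
          have := hx.1
          rw [div_lt_iff₀ h2k] at this
          linarith
        have hfN2 : ((Fsk β1 β2)^[k] (x, y)).1 < 1 := by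
          rw [hfst]
          have := hx.2
          rw [lt_div_iff₀ h2k] at this
          linarith
        have hsnd : ((Fsk β1 β2)^[N] ((Fsk β1 β2)^[k] (x, y))).2 = (g2 β2)^[N] yk :=
          phase2 β1 β2 N _ hfN1 hfN2
        have hdropped : (g2 β2)^[N] yk ≤ c :=
          drop β2 η b20 b21 hη0 N hdropN yk P0 hyk2
        have hit : (Fsk β1 β2)^[N + k] (x, y) = (Fsk β1 β2)^[N] ((Fsk β1 β2)^[k] (x, y)) :=
          Function.iterate_add_apply _ N k _
        intro hmem
        have hgt : c < ((Fsk β1 β2)^[N + k] (x, y)).2 := hmem.1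
        rw [hit, hsnd] at hgt
        linarith
    have hvolX : 0 < volume X := by
      rw [hX, Real.volume_Ioo]
      apply ENNReal.ofReal_pos.2
      have : ((j:ℝ)+1)/2^k - ((j:ℝ)+1-(1/2)^N)/2^k = (1/2)^N/2^k := by ring
      rw [this]
      positivity
    have hvolY : 0 < volume Y := by
      rw [hY, Real.volume_Ioo]
      apply ENNReal.ofReal_pos.2
      linarith
    have hvol : 0 < volume (X ×ˢ Y) := by
      rw [Measure.volume_eq_prod, Measure.prod_prod]
      exact ENNReal.mul_pos hvolX.ne' hvolY.ne'
    exact lt_of_lt_of_le hvol (measure_mono hsub)
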